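/- Let C be a connected subcomplex of a genus g triangulation T whose complementary dual D is connected, and let e be a split edge of C. Then the split operation at e — doubling e into two parallel edges delimiting a face of degree 2, and adding this face and the two copies of e to C — leaves D connected, increases the number of boundary faces of C by 1, decreases the Euler characteristic χ(C) by 1, and leaves both the Euler characteristic and the genus of the map associated with C unchanged. -/

import Mathlib

set_option linter.unusedSectionVars false

/- ----------------------------------------------------------------
   A formalization of (topological) maps on closed orientable
   surfaces via combinatorial maps: a finite set of brins
   (half-edges/darts), a permutation `next` giving the clockwise
   order of the brins around their origin vertex, and a fixed-point
   free involution `opp` exchanging the two brins of each edge.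
   Vertices are the orbits of `next`, edges the orbits of `opp`,
   faces the orbits of the facial-walk permutation
   `facePerm = opp ∘ next` (the follower of a brin, then its
   opposite).
   ---------------------------------------------------------------- -/

structure CombMap (D : Type) [Fintype D] [DecidableEq D] where
  next : Equiv.Perm D
  opp  : Equiv.Perm D
  opp_invol : ∀ d, opp (opp d) = d
  opp_ne : ∀ d, opp d ≠ d

namespace CombMap

variable {D : Type} [Fintype D] [DecidableEq D]

/-- the facial-walk permutation: `b_{i+1}` is the opposite of the follower of `b_i` -/
def facePerm (M : CombMap D) : Equiv.Perm D := M.next.trans M.opp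

/-- forward orbit of a dart under a function -/
def forb (f : D → D) (d : D) : Set D := {h | ∃ n : ℕ, f^[n] d = h}

/-- number of orbits of `f` met by the (f-invariant) set `s` -/
noncomputable def numOrbitsIn (f : D → D) (s : Set D) : ℕ :=
  ((fun d => forb f d) '' s).ncard

noncomputable def numVertices (M : CombMap D) : ℕ := numOrbitsIn (⇑M.next) Set.univ
noncomputable def numEdges (M : CombMap D) : ℕ := numOrbitsIn (⇑M.opp) Set.univ
noncomputable def numFaces (M : CombMap D) : ℕ := numOrbitsIn (⇑M.facePerm) Set.univ

noncomputable def eulerChar (M : CombMap D) : ℤ :=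
  (numVertices M : ℤ) - (numEdges M : ℤ) + (numFaces M : ℤ)

/-- the genus `g` of the surface on which `M` is embedded: Euler's relation `2 - 2g = |V|-|E|+|F|` -/
def HasGenus (M : CombMap D) (g : ℕ) : Prop := M.eulerChar = 2 - 2 * (g : ℤ)

def Connected (M : CombMap D) : Prop :=
  ∀ d d' : D, Relation.ReflTransGen (fun a b => b = M.next a ∨ b = M.opp a) d d'

/-- the two darts have the same origin vertex -/
def sameVertex (M : CombMap D) (d d' : D) : Prop := d' ∈ forb (⇑M.next) d

def NoLoops (M : CombMap D) : Prop := ∀ d, ¬ M.sameVertex d (M.opp d)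

def NoMultipleEdges (M : CombMap D) : Prop :=
  ∀ d d', M.sameVertex d d' → M.sameVertex (M.opp d) (M.opp d') → d' = d ∨ d' = M.opp d

/-- a triangulation of genus `g`: a connected simple map, all of whose faces have degree 3 -/
structure IsTriang (M : CombMap D) (g : ℕ) : Prop where
  conn : M.Connected
  noLoops : M.NoLoops
  noMult : M.NoMultipleEdges
  deg3 : ∀ d, (⇑M.facePerm)^[3] d = d ∧ M.facePerm d ≠ d
  genus : M.HasGenus g

/- root face: marked by a dart `r`; the root face is the facial orbit of `r`,
   and the root vertices are `v_i = origin of facePerm^[i] r`, `i = 0,1,2`. -/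

def rootDarts (M : CombMap D) (r : D) : Set D := forb (⇑M.facePerm) r

/-- the dart belongs to an edge of the root face (an "outer" edge) -/
def RootEdgeDart (M : CombMap D) (r : D) (h : D) : Prop :=
  h ∈ rootDarts M r ∨ M.opp h ∈ rootDarts M r

/-- the dart belongs to an inner edge -/
def InnerDart (M : CombMap D) (r : D) (h : D) : Prop := ¬ RootEdgeDart M r h

/-- a dart whose origin is the root vertex `v_i` -/
def vDart (M : CombMap D) (r : D) (i : ℕ) : D := (⇑M.facePerm)^[i] r

/-- `v` (as a dart) is an inner vertex, i.e. not a vertex of the root face -/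
def InnerVertex (M : CombMap D) (r : D) (v : D) : Prop :=
  ∀ h ∈ rootDarts M r, ¬ M.sameVertex h v

/- ------------------- subcomplexes ------------------- -/

/-- A subcomplex `C = (V',E',F')` of `M`, encoded by the sets of darts of its
vertices, edges and faces: `Vs` is `next`-closed (a union of vertex orbits),
`Es` is `opp`-closed, `Fs` is `facePerm`-closed, the edges of any chosen face
belong to `C`, and the endpoints of any chosen edge belong to `C`. -/
structure Subcomplex (M : CombMap D) where
  Vs : Set D
  Es : Set D
  Fs : Set D
  vs_closed : ∀ d ∈ Vs, M.next d ∈ Vs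
  es_closed : ∀ d ∈ Es, M.opp d ∈ Es
  fs_closed : ∀ d ∈ Fs, M.facePerm d ∈ Fs
  face_edges : ∀ d ∈ Fs, d ∈ Es
  edge_verts : ∀ d ∈ Es, d ∈ Vs

noncomputable def Subcomplex.eulerChar {M : CombMap D} (C : Subcomplex M) : ℤ :=
  (numOrbitsIn (⇑M.next) C.Vs : ℤ) - (numOrbitsIn (⇑M.opp) C.Es : ℤ)
    + (numOrbitsIn (⇑M.facePerm) C.Fs : ℤ)

/-- first-return time (≥ 1) of the iteration of `f` into `s` -/
noncomputable def returnSteps (f : Equiv.Perm D) (s : Set D) (d : D) : ℕ :=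
  sInf {k | 0 < k ∧ (⇑f)^[k] d ∈ s}

/-- first-return map of `f` into `s`: the follower of `d` within `s` -/
noncomputable def firstReturn (f : Equiv.Perm D) (s : Set D) (d : D) : D :=
  (⇑f)^[returnSteps f s d] d

/-- in the map induced on a set `E2` of darts (rotations given by first return of `next`),
the facial-walk successor: follower within `E2`, then opposite -/
noncomputable def gwalk (M : CombMap D) (E2 : Set D) (d : D) : D :=
  M.opp (firstReturn M.next E2 d)

/-- number of facial walks of the subgraph spanned by the darts `E2` -/
noncomputable def graphFaces (M : CombMap D) (E2 : Set D) : ℕ :=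
  numOrbitsIn (gwalk M E2) E2

def graphFaceOrbits (M : CombMap D) (E2 : Set D) : Set (Set D) :=
  {s | ∃ d ∈ E2, s = forb (gwalk M E2) d}

/-- the facial-walk successor on the boundary of a subcomplex -/
noncomputable def Subcomplex.bwalk {M : CombMap D} (C : Subcomplex M) : D → D :=
  gwalk M C.Es

/-- a boundary brin: a brin of `C` lying on a facial walk of `C` which does not
bound a face of `C` (for `Fs` a union of full face orbits these are the brins
of `Es \ Fs`); it is identified with the boundary corner it starts -/
def Subcomplex.BoundaryBrin {M : CombMap D} (C : Subcomplex M) (d : D) : Prop :=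
  d ∈ C.Es ∧ d ∉ C.Fs

/-- number of boundary faces of `C` (one disk attached to each boundary walk) -/
noncomputable def Subcomplex.numBoundaryFaces {M : CombMap D} (C : Subcomplex M) : ℕ :=
  numOrbitsIn C.bwalk (C.Es \ C.Fs)

/-- Euler characteristic of the map associated with `C` (disks attached) -/
noncomputable def Subcomplex.assocEulerChar {M : CombMap D} (C : Subcomplex M) : ℤ :=
  C.eulerChar + (C.numBoundaryFaces : ℤ)

/-- the map associated with `C` has genus `g'` -/
def Subcomplex.assocHasGenus {M : CombMap D} (C : Subcomplex M) (g' : ℤ) : Prop :=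
  C.assocEulerChar = 2 - 2 * g'

/-- the exterior brins incident to the boundary corner at the boundary brin `d`:
the brins of `M \ C` strictly between `d` and its follower within `C`,
in cw order around the origin of `d` -/
def Subcomplex.cornerExterior {M : CombMap D} (C : Subcomplex M) (d : D) : Set D :=
  {g | ∃ j, 0 < j ∧ j < returnSteps M.next C.Es d ∧ g = (⇑M.next)^[j] d}

/-- a chordal edge: an edge of `M \ C` whose two brins are exterior brins
of boundary corners of `C` -/
def Subcomplex.Chordal {M : CombMap D} (C : Subcomplex M) (h : D) : Prop :=
  h ∉ C.Es ∧ M.opp h ∉ C.Es ∧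
  (∃ d, C.BoundaryBrin d ∧ h ∈ C.cornerExterior d) ∧
  (∃ d, C.BoundaryBrin d ∧ M.opp h ∈ C.cornerExterior d)

/-- a free boundary corner: no exterior edge of the corner is chordal -/
def Subcomplex.FreeCorner {M : CombMap D} (C : Subcomplex M) (d : D) : Prop :=
  C.BoundaryBrin d ∧ ∀ g ∈ C.cornerExterior d, ¬ C.Chordal g

/-- connectivity (through vertices and edges of `C`, avoiding the edges of `A`) -/
def Subcomplex.reachAvoiding {M : CombMap D} (C : Subcomplex M) (A : Set D) (a b : D) : Prop :=
  Relation.ReflTransGen (fun x y =>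
    (x ∈ C.Vs ∧ y ∈ C.Vs ∧ M.sameVertex x y) ∨
    (x ∈ C.Es ∧ x ∉ A ∧ M.opp x ∉ A ∧ y = M.opp x)) a b

def Subcomplex.Conn {M : CombMap D} (C : Subcomplex M) : Prop :=
  ∀ a ∈ C.Vs, ∀ b ∈ C.Vs, C.reachAvoiding ∅ a b

/-- a bridge: an edge whose removal disconnects the subcomplex -/
def Subcomplex.Bridge {M : CombMap D} (C : Subcomplex M) (h : D) : Prop :=
  h ∈ C.Es ∧ ¬ (∀ a ∈ C.Vs, ∀ b ∈ C.Vs, C.reachAvoiding {h, M.opp h} a b)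

/-- two boundary corners lie on the same boundary walk (boundary face) of `C` -/
def Subcomplex.SameBoundaryFace {M : CombMap D} (C : Subcomplex M) (a b : D) : Prop :=
  b ∈ forb C.bwalk a ∨ a ∈ forb C.bwalk b

/- ------------------- duality ------------------- -/

/-- the dual map: same darts, vertices of the dual are the faces of `M`
(rotation given by the facial walks), and `opp` unchanged. Under this
encoding the dual brin `h*` of a brin `h` is `h` itself. -/
def dual (M : CombMap D) : CombMap D where
  next := M.facePerm
  opp := M.opp
  opp_invol := M.opp_invol
  opp_ne := M.opp_ne

lemma perm_inv_mem (f : Equiv.Perm D) (s : Set D)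
    (hs : ∀ d ∈ s, f d ∈ s) : ∀ d ∈ s, f.symm d ∈ s := by
  have hiter : ∀ n : ℕ, ∀ d ∈ s, (⇑f)^[n] d ∈ s := by
    intro n
    induction n with
    | zero => intro d hd; simpa using hd
    | succ n ih => intro d hd; rw [Function.iterate_succ_apply]; exact ih _ (hs d hd)
  intro d hd
  have hpos : 0 < orderOf f := orderOf_pos f
  have hfix : (⇑f)^[orderOf f] d = d := by
    rw [← Equiv.Perm.coe_pow, pow_orderOf_eq_one]; rfl
  have h2 : (⇑f)^[orderOf f] d = f ((⇑f)^[orderOf f - 1] d) := by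
    conv_lhs => rw [← Nat.sub_add_cancel hpos]
    rw [Function.iterate_succ_apply']
  have hkey : f.symm d = (⇑f)^[orderOf f - 1] d := by
    apply f.injective
    rw [Equiv.apply_symm_apply, ← h2, hfix]
  rw [hkey]
  exact hiter _ d hd

lemma dual_facePerm (M : CombMap D) (d : D) : (dual M).facePerm d = M.next d := by
  simp [dual, facePerm, Equiv.trans_apply, M.opp_invol]

/-- the complementary dual of a subcomplex `C` of `M`: the subcomplex of the dual
map formed by the vertices dual to unchosen faces, edges dual to unchosen edges,
and faces dual to unchosen vertices -/
def Subcomplex.compDual {M : CombMap D} (C : Subcomplex M) : Subcomplex (dual M) where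
  Vs := C.Fsᶜ
  Es := C.Esᶜ
  Fs := C.Vsᶜ
  vs_closed := by
    intro d hd hmem
    have hmem' : M.facePerm d ∈ C.Fs := hmem
    exact hd (by
      have := perm_inv_mem M.facePerm C.Fs C.fs_closed _ hmem'
      simpa using this)
  es_closed := by
    intro d hd hmem
    have hmem' : M.opp d ∈ C.Es := hmem
    exact hd (by
      have := perm_inv_mem M.opp C.Es C.es_closed _ hmem'
      simpa using this)
  fs_closed := by
    intro d hd hmem
    rw [dual_facePerm] at hmem
    exact hd (by
      have := perm_inv_mem M.next C.Vs C.vs_closed _ hmem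
      simpa using this)
  face_edges := by
    intro d hd hmem
    exact hd (C.edge_verts _ hmem)
  edge_verts := by
    intro d hd hmem
    exact hd (C.face_edges _ hmem)

/- ------------------- complete boundary walks ------------------- -/

open Classical in
/-- the successor along the complete list of brins of a boundary walk
(boundary brins interleaved with the exterior brins of each boundary corner) -/
noncomputable def cwalk (M : CombMap D) (E2 : Set D) (h : D) : D :=
  if M.next h ∈ E2 then M.opp (M.next h) else M.next h

noncomputable def Subcomplex.completeWalk {M : CombMap D} (C : Subcomplex M) : D → D :=
  cwalk M C.Es

/-- brins appearing on some complete boundary walk of `C` -/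
def Subcomplex.walkSupport {M : CombMap D} (C : Subcomplex M) : Set D :=
  {h | ∃ d, C.BoundaryBrin d ∧ h ∈ forb C.completeWalk d}

/-- the complete boundary walks of `C`, as sets of brins -/
def Subcomplex.boundaryOrbits {M : CombMap D} (C : Subcomplex M) : Set (Set D) :=
  {s | ∃ d, C.BoundaryBrin d ∧ s = forb C.completeWalk d}

noncomputable def Subcomplex.walkPeriod {M : CombMap D} (C : Subcomplex M) (d : D) : ℕ :=
  sInf {n | 0 < n ∧ (C.completeWalk)^[n] d = d}

open Classical in
/-- the dual brin map of Lemma `boundary`: `φ(h) = h*` if `h ∈ C`,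
`φ(h) = opposite(h*)` otherwise (recall `h* = h` in our encoding of the dual) -/
noncomputable def dphi (M : CombMap D) (C : Subcomplex M) (h : D) : D :=
  if h ∈ C.Es then h else M.opp h

/-- same edge (as darts) -/
def SameEdgeDart (M : CombMap D) (a b : D) : Prop := b = a ∨ b = M.opp a

/- ------------------- the traversal operations ------------------- -/

/-- the darts of the faces of `M \ C` incident to the boundary corner at `d`,
together with all darts on these faces -/
def Subcomplex.cornerFaceDarts {M : CombMap D} (C : Subcomplex M) (d : D) : Set D :=
  {g | ∃ j, j < returnSteps M.next C.Es d ∧ g ∈ forb (⇑M.facePerm) ((⇑M.next)^[j] d)}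

/-- the operation `conquer(b)` at a free boundary corner `b = d`: add to `C` all
exterior faces incident to `b`, together with their edges and vertices -/
def IsConquer {M : CombMap D} (C : Subcomplex M) (d : D) (C' : Subcomplex M) : Prop :=
  C.FreeCorner d ∧
  C'.Fs = C.Fs ∪ C.cornerFaceDarts d ∧
  C'.Es = C.Es ∪ C.cornerFaceDarts d ∪ (⇑M.opp) '' C.cornerFaceDarts d ∧
  C'.Vs = C.Vs ∪ {g | ∃ h ∈ C'.Es, g ∈ forb (⇑M.next) h}

/-- adding a (split or merge) chordal edge `h` to `C` -/
def IsAddEdge {M : CombMap D} (C : Subcomplex M) (h : D) (C' : Subcomplex M) : Prop :=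
  C'.Fs = C.Fs ∧ C'.Es = C.Es ∪ {h, M.opp h} ∧ C'.Vs = C.Vs

/-- a split edge: a non-separating chordal edge (its dual is not a bridge of the
complementary dual) whose two brins are incident to boundary corners lying in
the same boundary face of `C` -/
def Subcomplex.SplitEdge {M : CombMap D} (C : Subcomplex M) (h : D) : Prop :=
  C.Chordal h ∧ ¬ C.compDual.Bridge h ∧
  ∀ d d', C.BoundaryBrin d → h ∈ C.cornerExterior d →
    C.BoundaryBrin d' → M.opp h ∈ C.cornerExterior d' → C.SameBoundaryFace d d'

/-- a merge edge: a chordal edge whose two brins are incident to boundary corners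
lying in distinct boundary faces of `C` -/
def Subcomplex.MergeEdge {M : CombMap D} (C : Subcomplex M) (h : D) : Prop :=
  C.Chordal h ∧
  ∃ d d', C.BoundaryBrin d ∧ h ∈ C.cornerExterior d ∧
    C.BoundaryBrin d' ∧ M.opp h ∈ C.cornerExterior d' ∧ ¬ C.SameBoundaryFace d d'

/-- the initial subcomplex: the root face together with its edges and vertices -/
def IsRootComplex (M : CombMap D) (r : D) (C : Subcomplex M) : Prop :=
  C.Fs = rootDarts M r ∧
  C.Es = rootDarts M r ∪ (⇑M.opp) '' rootDarts M r ∧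
  C.Vs = {g | ∃ h ∈ C.Es, g ∈ forb (⇑M.next) h}

def IsFull {M : CombMap D} (C : Subcomplex M) : Prop :=
  C.Fs = Set.univ ∧ C.Es = Set.univ ∧ C.Vs = Set.univ

/-- one (uncolored) step of the traversal: a conquest, a split, or a merge -/
def PlainStep (M : CombMap D) (C C' : Subcomplex M) : Prop :=
  (∃ d, IsConquer C d C') ∨ (∃ h, (C.SplitEdge h ∨ C.MergeEdge h) ∧ IsAddEdge C h C')

/-- a subcomplex reachable from the root face by traversal steps -/
def ExecReach (M : CombMap D) (r : D) (C : Subcomplex M) : Prop :=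
  ∃ C0, IsRootComplex M r C0 ∧ Relation.ReflTransGen (PlainStep M) C0 C

/- ------------------- the colorient rule ------------------- -/

/-- the `colorient` rule at the free boundary corner `d` (with `d'` the follower
of `d` within `C`): the edge of `d` is oriented out of the corner vertex with
color 1, the edge of `d'` is oriented outward with color 0, and all exterior
edges of the corner are oriented toward the corner vertex with color 2 (on
non-special inner edges the opposite dart records the same edge seen from the
other endpoint; each dart of a special edge records its own copy). -/
def ColorientEq (M : CombMap D) (r : D) (C : Subcomplex M) (d : D)
    (dir : D → Bool) (col : D → Fin 3) (special : Set D) : Prop :=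
  (InnerDart M r d → dir d = true ∧ col d = 1 ∧
      (d ∉ special → dir (M.opp d) = false ∧ col (M.opp d) = 1)) ∧
  (InnerDart M r (firstReturn M.next C.Es d) →
      dir (firstReturn M.next C.Es d) = true ∧ col (firstReturn M.next C.Es d) = 0 ∧
      (firstReturn M.next C.Es d ∉ special →
        dir (M.opp (firstReturn M.next C.Es d)) = false ∧
        col (M.opp (firstReturn M.next C.Es d)) = 0)) ∧
  (∀ j, 0 < j → j < returnSteps M.next C.Es d → InnerDart M r ((⇑M.next)^[j] d) →
      dir ((⇑M.next)^[j] d) = false ∧ col ((⇑M.next)^[j] d) = 2 ∧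
      dir (M.opp ((⇑M.next)^[j] d)) = true ∧ col (M.opp ((⇑M.next)^[j] d)) = 2)

/-- one step of `ComputeSchnyderAnyGenus`, recording colors and orientations -/
def GStep (M : CombMap D) (r : D) (C C' : Subcomplex M)
    (dir : D → Bool) (col : D → Fin 3) (special : Set D) : Prop :=
  (∃ d, IsConquer C d C' ∧ ColorientEq M r C d dir col special) ∨
  (∃ h ∈ special, (C.SplitEdge h ∨ C.MergeEdge h) ∧ IsAddEdge C h C')

/-- a complete execution of the traversal algorithm `ComputeSchnyderAnyGenus`
on `M` with root face at `r`, producing the orientation `dir`, the coloring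
`col` and the set `special` of darts of the (split/merge) special edges -/
structure GExec (M : CombMap D) (r : D)
    (dir : D → Bool) (col : D → Fin 3) (special : Set D) where
  N : ℕ
  Cs : ℕ → Subcomplex M
  init : IsRootComplex M r (Cs 0)
  final : IsFull (Cs N)
  step : ∀ k < N, GStep M r (Cs k) (Cs (k + 1)) dir col special
  special_opp : ∀ h ∈ special, M.opp h ∈ special
  special_added : ∀ h ∈ special, ∃ k < N, ∃ h',
      ((Cs k).SplitEdge h' ∨ (Cs k).MergeEdge h') ∧ IsAddEdge (Cs k) h' (Cs (k + 1)) ∧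
      (h = h' ∨ h = M.opp h')

/-- an execution of the planar traversal algorithm (conquests only) -/
structure PlanarExec (M : CombMap D) (r : D) (dir : D → Bool) (col : D → Fin 3) where
  N : ℕ
  Cs : ℕ → Subcomplex M
  init : IsRootComplex M r (Cs 0)
  final : IsFull (Cs N)
  step : ∀ k < N, ∃ d, IsConquer (Cs k) d (Cs (k + 1)) ∧
      ColorientEq M r (Cs k) d dir col ∅

/-- a boundary brin of the edge `{v₀,v₁}` (marking the boundary face `f₀`) -/
def RootBoundaryBrin (M : CombMap D) (r : D) (C : Subcomplex M) (d0 : D) : Prop :=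
  C.BoundaryBrin d0 ∧ M.sameVertex (vDart M r 0) d0 ∧ M.sameVertex (vDart M r 1) (M.opp d0)

/-- the implementation of the traversal that always chooses an update-candidate
incident to the boundary face containing `{v₀,v₁}` and gives priority to free
boundary corners over split and merge edges -/
def PriorityRun {M : CombMap D} (r : D) {dir : D → Bool} {col : D → Fin 3}
    {special : Set D} (E : GExec M r dir col special) : Prop :=
  ∀ k < E.N,
    (∀ d, IsConquer (E.Cs k) d (E.Cs (k + 1)) →
        ∃ d0, RootBoundaryBrin M r (E.Cs k) d0 ∧ (E.Cs k).SameBoundaryFace d0 d) ∧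
    (∀ h, ((E.Cs k).SplitEdge h ∨ (E.Cs k).MergeEdge h) →
        IsAddEdge (E.Cs k) h (E.Cs (k + 1)) →
        (¬ ∃ d d0, RootBoundaryBrin M r (E.Cs k) d0 ∧ (E.Cs k).FreeCorner d ∧
            (E.Cs k).SameBoundaryFace d0 d) ∧
        (∃ d d0, RootBoundaryBrin M r (E.Cs k) d0 ∧ (E.Cs k).BoundaryBrin d ∧
            (E.Cs k).SameBoundaryFace d0 d ∧
            (h ∈ (E.Cs k).cornerExterior d ∨ M.opp h ∈ (E.Cs k).cornerExterior d)))

/- ------------------- Schnyder woods ------------------- -/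

/-- the word pattern `Seq(In 1), Out 0, Seq(In 2), Out 1, Seq(In 0)` on values
`(outgoing?, color)` read in ccw order -/
def SchnyderPattern (l : List (Bool × Fin 3)) : Prop :=
  ∃ a b c : ℕ, l = List.replicate a ((false : Bool), (1 : Fin 3)) ++
    [((true : Bool), (0 : Fin 3))] ++ List.replicate b ((false : Bool), (2 : Fin 3)) ++
    [((true : Bool), (1 : Fin 3))] ++ List.replicate c ((false : Bool), (0 : Fin 3))

noncomputable def vdeg (M : CombMap D) (v : D) : ℕ := (forb (⇑M.next) v).ncard

/-- the ccw successor around the origin vertex -/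
noncomputable def ccwSucc (M : CombMap D) : D → D := ⇑M.next.symm

/-- the darts strictly after `s` in ccw order around its origin, one full turn -/
noncomputable def ccwTail (M : CombMap D) (s : D) : List D :=
  (List.range (vdeg M s - 1)).map fun i => (ccwSucc M)^[i + 1] s

open Classical in
/-- the darts of the sector starting right after the delimiter `s` (in ccw order),
up to the next delimiter -/
noncomputable def sectorDarts (M : CombMap D) (P : D → Prop) (s : D) : List D :=
  (ccwTail M s).takeWhile fun g => decide (¬ P g)

noncomputable def nextDelim (M : CombMap D) (P : D → Prop) (s : D) : D :=
  (ccwSucc M)^[(sectorDarts M P s).length + 1] s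

open Classical in
/-- the sequence of values `(outgoing?, color)` of the inner edges of the sector
that follows the delimiter `s` in ccw order around the origin of `s`.  A special
edge is doubled into two copies enclosing a special face: the copy recorded on the
dart `g` itself appears at the end of the sector preceding the special face of `g`,
and the copy recorded on `M.opp g` (seen from the origin of `g`, hence with
direction flipped) appears at the beginning of the sector following it.  When
`excl2 = true` (local condition at an inner vertex), a copy which is the outgoing
edge of color 2 is excluded from its sector. -/
noncomputable def sectorVals (M : CombMap D) (r : D) (special : Set D)
    (dir : D → Bool) (col : D → Fin 3) (P : D → Prop) (excl2 : Bool) (s : D) :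
    List (Bool × Fin 3) :=
  (if s ∈ special ∧ ¬ (excl2 = true ∧ (!(dir (M.opp s)), col (M.opp s)) =
      ((true : Bool), (2 : Fin 3)))
    then [((!(dir (M.opp s))), col (M.opp s))] else []) ++
  ((sectorDarts M P s).filter fun g => decide (InnerDart M r g)).map
      (fun g => (dir g, col g)) ++
  (if nextDelim M P s ∈ special ∧ ¬ (excl2 = true ∧
      (dir (nextDelim M P s), col (nextDelim M P s)) = ((true : Bool), (2 : Fin 3)))
    then [(dir (nextDelim M P s), col (nextDelim M P s))] else [])

/-- delimiters around an inner vertex: the special darts and the outgoing dart of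
color 2 -/
def innerDelim (special : Set D) (dir : D → Bool) (col : D → Fin 3) (g : D) : Prop :=
  g ∈ special ∨ (dir g = true ∧ col g = 2)

/-- delimiters around the root vertex `v_i`: the special darts and the root-face
corner (at the root dart `vDart M r i`) -/
def rootDelim (M : CombMap D) (r : D) (special : Set D) (i : ℕ) (g : D) : Prop :=
  g ∈ special ∨ g = vDart M r i

/-- local condition at an inner vertex `v`: exactly one outgoing edge (occurrence)
of color 2, and every sector (maximal interval avoiding the special faces and this
edge) reads `Seq(In 1), Out 0, Seq(In 2), Out 1, Seq(In 0)` in ccw order -/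
def LocalVertexCond (M : CombMap D) (r : D) (special : Set D)
    (dir : D → Bool) (col : D → Fin 3) (v : D) : Prop :=
  (∃! gc : D × Bool, M.sameVertex v gc.1 ∧
      cond gc.2 (gc.1 ∈ special ∧ dir (M.opp gc.1) = false ∧ col (M.opp gc.1) = 2)
        (dir gc.1 = true ∧ col gc.1 = 2)) ∧
  ∀ s, M.sameVertex v s → innerDelim special dir col s →
    SchnyderPattern (sectorVals M r special dir col (innerDelim special dir col) true s)

/-- root-face condition at `v_i` (`i = 0` or `1`): all inner edges of the root
sector are ingoing of color `i`, and every other sector reads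
`Seq(In 1), Out 0, Seq(In 2), Out 1, Seq(In 0)` in ccw order -/
def RootVertexCond (M : CombMap D) (r : D) (special : Set D)
    (dir : D → Bool) (col : D → Fin 3) (i : Fin 3) : Prop :=
  (∀ p ∈ sectorVals M r special dir col (rootDelim M r special (i : ℕ)) false
      (vDart M r (i : ℕ)), p = ((false : Bool), i)) ∧
  (∀ s, M.sameVertex (vDart M r (i : ℕ)) s → s ∈ special →
      SchnyderPattern (sectorVals M r special dir col
        (rootDelim M r special (i : ℕ)) false s))

/-- a cut-graph: a spanning cellular subgraph with a unique face, i.e. a connected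
spanning subgraph whose complement on the surface is a single open disk -/
def IsCutGraph (M : CombMap D) (gT : ℕ) (E2 : Set D) : Prop :=
  (∀ h ∈ E2, M.opp h ∈ E2) ∧
  (∀ v : D, ∃ h ∈ E2, M.sameVertex v h) ∧
  (∀ a ∈ E2, ∀ b ∈ E2, Relation.ReflTransGen
      (fun x y => x ∈ E2 ∧ y ∈ E2 ∧ (M.sameVertex x y ∨ y = M.opp x)) a b) ∧
  graphFaces M E2 = 1 ∧
  ((M.numVertices : ℤ) - (numOrbitsIn (⇑M.opp) E2 : ℤ)) + 1 = 2 - 2 * (gT : ℤ)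

/-- the darts of the cut-graph `G₂`: the (non-special) edges of color 2, the two
root edges `{v₀,v₂}` and `{v₁,v₂}`, and the special edges (not doubled) -/
def G2darts (M : CombMap D) (r : D) (special : Set D) (col : D → Fin 3) : Set D :=
  {h | InnerDart M r h ∧ h ∉ special ∧ col h = 2} ∪ special ∪
  {h | RootEdgeDart M r h ∧ (M.sameVertex (vDart M r 2) h ∨
      M.sameVertex (vDart M r 2) (M.opp h))}

/-- the edges of color 2 form a tree spanning all vertices except `v₀` and `v₁`,
rooted at `v₂` with all edges directed toward `v₂` -/
def Tree2Cond (M : CombMap D) (r : D) (special : Set D)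
    (dir : D → Bool) (col : D → Fin 3) : Prop :=
  (∀ h, InnerDart M r h → h ∉ special → col h = 2 →
      ¬ M.sameVertex (vDart M r 0) h ∧ ¬ M.sameVertex (vDart M r 1) h) ∧
  (∀ v : D, ¬ M.sameVertex (vDart M r 0) v → ¬ M.sameVertex (vDart M r 1) v →
      ¬ M.sameVertex (vDart M r 2) v →
      ∃! h, M.sameVertex v h ∧ InnerDart M r h ∧ h ∉ special ∧ col h = 2 ∧
        dir h = true) ∧
  (∀ h, M.sameVertex (vDart M r 2) h →
      ¬ (InnerDart M r h ∧ h ∉ special ∧ col h = 2 ∧ dir h = true)) ∧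
  (∀ v : D, ¬ M.sameVertex (vDart M r 0) v → ¬ M.sameVertex (vDart M r 1) v →
      Relation.ReflTransGen (fun a b => ∃ h, M.sameVertex a h ∧ InnerDart M r h ∧
          h ∉ special ∧ col h = 2 ∧ dir h = true ∧ M.sameVertex b (M.opp h))
        v (vDart M r 2))

/-- a `g`-Schnyder wood of a genus-`gT` triangulation with root face at `r`:
the inner edges are partitioned into normal edges and special edges (set of
darts `special`, each special edge carrying two independently directed and
colored copies, recorded on its two darts), every edge is directed and colored
in `{0,1,2}`, subject to the root-face condition, the local condition for inner
vertices and the cut-graph condition -/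
structure IsGSchnyderWood (M : CombMap D) (r : D) (gT : ℕ)
    (special : Set D) (dir : D → Bool) (col : D → Fin 3) : Prop where
  special_opp : ∀ h ∈ special, M.opp h ∈ special
  special_inner : ∀ h ∈ special, InnerDart M r h
  consistent : ∀ h, InnerDart M r h → h ∉ special →
      dir (M.opp h) = !dir h ∧ col (M.opp h) = col h
  v2_nospecial : ∀ g, M.sameVertex (vDart M r 2) g → g ∉ special
  v2_in2 : ∀ g, M.sameVertex (vDart M r 2) g → InnerDart M r g →
      dir g = false ∧ col g = 2
  root0 : RootVertexCond M r special dir col 0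
  root1 : RootVertexCond M r special dir col 1
  local_inner : ∀ v, InnerVertex M r v → LocalVertexCond M r special dir col v
  tree2 : Tree2Cond M r special dir col
  cut : IsCutGraph M gT (G2darts M r special col)

/-- a Schnyder wood of a plane triangulation (Definition of Schnyder): an
orientation and coloring of the inner edges such that all inner edges incident
to `v_i` are ingoing of color `i`, and around each inner vertex the edges read,
in ccw order: `Out 2, Seq(In 1), Out 0, Seq(In 2), Out 1, Seq(In 0)` -/
structure IsPlanarSchnyderWood (M : CombMap D) (r : D)
    (dir : D → Bool) (col : D → Fin 3) : Prop where
  consistent : ∀ h, InnerDart M r h → dir (M.opp h) = !dir h ∧ col (M.opp h) = col h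
  root_cond : ∀ i : Fin 3, ∀ g, M.sameVertex (vDart M r (i : ℕ)) g →
      InnerDart M r g → dir g = false ∧ col g = i
  local_cond : ∀ v, InnerVertex M r v → LocalVertexCond M r ∅ dir col v

end CombMap

/- STATEMENT 5: Let C be a connected subcomplex of a genus g triangulation with
connected complementary dual D, and let e be a split edge of C.  The split
operation at e (doubling e into two parallel edges enclosing a degree-2 face
and adding them to C, modeled here by adding the edge e to C) leaves D
connected, increases the number of boundary faces of C by 1, decreases the
Euler characteristic χ(C) by 1, and leaves both the Euler characteristic and
the genus of the map associated with C unchanged. -/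

namespace SplitAux
open CombMap

variable {D : Type} [Fintype D] [DecidableEq D]

lemma iter_mem (f : D → D) (S : Set D) (hfS : ∀ x ∈ S, f x ∈ S) :
    ∀ n, ∀ x ∈ S, f^[n] x ∈ S := by
  intro n
  induction n with
  | zero => intro x hx; simpa using hx
  | succ n ih =>
      intro x hx
      rw [Function.iterate_succ_apply']
      exact hfS _ (ih x hx)

lemma iter_inj (f : D → D) (S : Set D) (hfS : ∀ x ∈ S, f x ∈ S)
    (hinj : ∀ x ∈ S, ∀ y ∈ S, f x = f y → x = y) :
    ∀ n, ∀ x ∈ S, ∀ y ∈ S, f^[n] x = f^[n] y → x = y := by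
  intro n
  induction n with
  | zero => intro x _ y _ h; simpa using h
  | succ n ih =>
      intro x hx y hy h
      rw [Function.iterate_succ_apply', Function.iterate_succ_apply'] at h
      exact ih x hx y hy (hinj _ (iter_mem f S hfS n x hx) _ (iter_mem f S hfS n y hy) h)

lemma exists_period (f : D → D) (S : Set D) (hfS : ∀ x ∈ S, f x ∈ S)
    (hinj : ∀ x ∈ S, ∀ y ∈ S, f x = f y → x = y) (x : D) (hx : x ∈ S) :
    ∃ n, 0 < n ∧ f^[n] x = x := by
  obtain ⟨a, b, hab, h⟩ := Finite.exists_ne_map_eq_of_infinite (fun n : ℕ => f^[n] x)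
  rcases Nat.lt_or_ge a b with hlt | hge
  · refine ⟨b - a, by omega, ?_⟩
    have hsum : f^[a + (b - a)] x = f^[a] (f^[b - a] x) := Function.iterate_add_apply f a (b - a) x
    have : a + (b - a) = b := by omega
    rw [this] at hsum
    exact iter_inj f S hfS hinj a _ (iter_mem f S hfS _ x hx) _ hx (by rw [← hsum, ← h])
  · have hlt : b < a := by omega
    refine ⟨a - b, by omega, ?_⟩
    have hsum : f^[b + (a - b)] x = f^[b] (f^[a - b] x) := Function.iterate_add_apply f b (a - b) x
    have : b + (a - b) = a := by omega
    rw [this] at hsum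
    exact iter_inj f S hfS hinj b _ (iter_mem f S hfS _ x hx) _ hx (by rw [← hsum, h])

lemma mem_forb_self (f : D → D) (x : D) : x ∈ forb f x := ⟨0, rfl⟩

lemma forb_mono (f : D → D) {x y : D} (h : y ∈ forb f x) : forb f y ⊆ forb f x := by
  obtain ⟨n, rfl⟩ := h
  rintro z ⟨m, rfl⟩
  exact ⟨n + m, by rw [Nat.add_comm, Function.iterate_add_apply]⟩

lemma mem_forb_symm (f : D → D) (S : Set D) (hfS : ∀ x ∈ S, f x ∈ S)
    (hinj : ∀ x ∈ S, ∀ y ∈ S, f x = f y → x = y) {x y : D} (hx : x ∈ S)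
    (h : y ∈ forb f x) : x ∈ forb f y := by
  obtain ⟨n, rfl⟩ := h
  obtain ⟨m, hm, hfix⟩ := exists_period f S hfS hinj x hx
  refine ⟨m * (n + 1) - n, ?_⟩
  have h1 : f^[m * (n + 1) - n + n] x = x := by
    have : m * (n + 1) - n + n = m * (n + 1) := by
      have := Nat.le_mul_of_pos_left (n + 1) hm; omega
    rw [this, Function.iterate_mul]
    exact Function.iterate_fixed hfix (n + 1)
  calc f^[m * (n + 1) - n] (f^[n] x) = f^[m * (n + 1) - n + n] x :=
        (Function.iterate_add_apply f _ n x).symm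
    _ = x := h1

lemma forb_eq_of_mem (f : D → D) (S : Set D) (hfS : ∀ x ∈ S, f x ∈ S)
    (hinj : ∀ x ∈ S, ∀ y ∈ S, f x = f y → x = y) {x y : D} (hx : x ∈ S)
    (h : y ∈ forb f x) : forb f y = forb f x :=
  Set.Subset.antisymm (forb_mono f h) (forb_mono f (mem_forb_symm f S hfS hinj hx h))

lemma forb_subset (f : D → D) (S : Set D) (hfS : ∀ x ∈ S, f x ∈ S) {x : D} (hx : x ∈ S) :
    forb f x ⊆ S := by
  rintro z ⟨n, rfl⟩
  exact iter_mem f S hfS n x hx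

lemma iterate_mod (f : D → D) {z : D} {m : ℕ} (hm : 0 < m) (hfix : f^[m] z = z) (n : ℕ) :
    f^[n] z = f^[n % m] z := by
  conv_lhs => rw [← Nat.mod_add_div n m]
  rw [Function.iterate_add_apply, Function.iterate_mul, Function.iterate_fixed hfix]

lemma orbit_split (f f' : D → D) (S : Set D) (d d' p q : D)
    (hfS : ∀ x ∈ S, f x ∈ S)
    (hinj : ∀ x ∈ S, ∀ y ∈ S, f x = f y → x = y)
    (hd : d ∈ S) (hd' : d' ∈ S) (hdd : d ≠ d')
    (hp : p ∉ S) (hq : q ∉ S) (hpq : p ≠ q)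
    (hsame : d' ∈ forb f d)
    (h1 : f' d = q) (h2 : f' q = f d') (h3 : f' d' = p) (h4 : f' p = f d)
    (h5 : ∀ x ∈ S, x ≠ d → x ≠ d' → f' x = f x) :
    numOrbitsIn f' (S ∪ {p, q}) = numOrbitsIn f S + 1 := by
  set S' : Set D := S ∪ {p, q} with hS'
  have hmemS' : ∀ x, x ∈ S' ↔ x ∈ S ∨ x = p ∨ x = q := by
    intro x
    simp only [hS', Set.mem_union, Set.mem_insert_iff, Set.mem_singleton_iff]
  have hpS' : p ∈ S' := (hmemS' p).2 (Or.inr (Or.inl rfl))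
  have hqS' : q ∈ S' := (hmemS' q).2 (Or.inr (Or.inr rfl))
  have hdS' : d ∈ S' := (hmemS' d).2 (Or.inl hd)
  have hd'S' : d' ∈ S' := (hmemS' d').2 (Or.inl hd')
  have hpd : p ≠ d := fun h => hp (h ▸ hd)
  have hpd' : p ≠ d' := fun h => hp (h ▸ hd')
  have hqd : q ≠ d := fun h => hq (h ▸ hd)
  have hqd' : q ≠ d' := fun h => hq (h ▸ hd')
  -- closure of f' on S'
  have hfS' : ∀ x ∈ S', f' x ∈ S' := by
    intro x hx
    rcases (hmemS' x).1 hx with hxS | rfl | rfl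
    · by_cases hxd : x = d
      · subst hxd; rw [h1]; exact hqS'
      · by_cases hxd' : x = d'
        · subst hxd'; rw [h3]; exact hpS'
        · rw [h5 x hxS hxd hxd']; exact (hmemS' _).2 (Or.inl (hfS x hxS))
    · rw [h4]; exact (hmemS' _).2 (Or.inl (hfS d hd))
    · rw [h2]; exact (hmemS' _).2 (Or.inl (hfS d' hd'))
  -- value classification
  have hval : ∀ x ∈ S', (x ∈ S ∧ x ≠ d ∧ x ≠ d' ∧ f' x = f x) ∨ (x = d ∧ f' x = q) ∨
      (x = d' ∧ f' x = p) ∨ (x = p ∧ f' x = f d) ∨ (x = q ∧ f' x = f d') := by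
    intro x hx
    rcases (hmemS' x).1 hx with hxS | rfl | rfl
    · by_cases hxd : x = d
      · exact Or.inr (Or.inl ⟨hxd, by rw [hxd, h1]⟩)
      · by_cases hxd' : x = d'
        · exact Or.inr (Or.inr (Or.inl ⟨hxd', by rw [hxd', h3]⟩))
        · exact Or.inl ⟨hxS, hxd, hxd', h5 x hxS hxd hxd'⟩
    · exact Or.inr (Or.inr (Or.inr (Or.inl ⟨rfl, h4⟩)))
    · exact Or.inr (Or.inr (Or.inr (Or.inr ⟨rfl, h2⟩)))
  -- injectivity of f' on S'
  have hinj' : ∀ x ∈ S', ∀ y ∈ S', f' x = f' y → x = y := by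
    intro x hx y hy hxy
    have hfdS : f d ∈ S := hfS d hd
    have hfd'S : f d' ∈ S := hfS d' hd'
    have hfdd' : f d ≠ f d' := fun h => hdd (hinj d hd d' hd' h)
    rcases hval x hx with ⟨hxS, hxd, hxd', hx5⟩ | ⟨hxe, hx5⟩ | ⟨hxe, hx5⟩ | ⟨hxe, hx5⟩ | ⟨hxe, hx5⟩ <;>
      rcases hval y hy with ⟨hyS, hyd, hyd', hy5⟩ | ⟨hye, hy5⟩ | ⟨hye, hy5⟩ | ⟨hye, hy5⟩ | ⟨hye, hy5⟩ <;>
      rw [hx5, hy5] at hxy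
    · exact hinj x hxS y hyS hxy
    · exact absurd (hxy ▸ hfS x hxS) hq
    · exact absurd (hxy ▸ hfS x hxS) hp
    · exact absurd (hinj x hxS d hd hxy) hxd
    · exact absurd (hinj x hxS d' hd' hxy) hxd'
    · exact absurd (hxy.symm ▸ hfS y hyS) hq
    · rw [hxe, hye]
    · exact absurd hxy.symm hpq
    · exact absurd (hxy.symm ▸ hfdS) hq
    · exact absurd (hxy.symm ▸ hfd'S) hq
    · exact absurd (hxy.symm ▸ hfS y hyS) hp
    · exact absurd hxy hpq
    · rw [hxe, hye]
    · exact absurd (hxy.symm ▸ hfdS) hp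
    · exact absurd (hxy.symm ▸ hfd'S) hp
    · exact absurd (hinj d hd y hyS hxy).symm hyd
    · exact absurd (hxy ▸ hfdS) hq
    · exact absurd (hxy ▸ hfdS) hp
    · rw [hxe, hye]
    · exact absurd hxy hfdd'
    · exact absurd (hinj d' hd' y hyS hxy).symm hyd'
    · exact absurd (hxy ▸ hfd'S) hq
    · exact absurd (hxy ▸ hfd'S) hp
    · exact absurd hxy.symm hfdd'
    · rw [hxe, hye]
  -- orbit of d under f
  set O : Set D := forb f d with hO
  have hOS : O ⊆ S := forb_subset f S hfS hd
  have hOd' : forb f d' = forb f d := forb_eq_of_mem f S hfS hinj hd hsame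
  -- orbits away from O are unchanged
  have keyA : ∀ x ∈ S, x ∉ O → ∀ n, f'^[n] x = f^[n] x := by
    intro x hx hxO n
    induction n with
    | zero => rfl
    | succ n ih =>
        rw [Function.iterate_succ_apply', Function.iterate_succ_apply', ih]
        have hz : f^[n] x ∈ S := iter_mem f S hfS n x hx
        have hzd : f^[n] x ≠ d := by
          intro h
          apply hxO
          rw [hO, forb_eq_of_mem f S hfS hinj hx ⟨n, h⟩]
          exact mem_forb_self f x
        have hzd' : f^[n] x ≠ d' := by
          intro h
          apply hxO
          rw [hO, ← hOd', forb_eq_of_mem f S hfS hinj hx ⟨n, h⟩]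
          exact mem_forb_self f x
        exact h5 _ hz hzd hzd'
  have keyA2 : ∀ x ∈ S, x ∉ O → forb f' x = forb f x := by
    intro x hx hxO
    ext z
    exact ⟨fun ⟨n, hn⟩ => ⟨n, by rw [← keyA x hx hxO n]; exact hn⟩,
      fun ⟨n, hn⟩ => ⟨n, by rw [keyA x hx hxO n]; exact hn⟩⟩
  -- orbits inside O merge into the orbits of d and d'
  have keyB : ∀ x ∈ O, forb f' x = forb f' d ∨ forb f' x = forb f' d' := by
    intro x hxO
    have hxS : x ∈ S := hOS hxO
    have hxS' : x ∈ S' := (hmemS' x).2 (Or.inl hxS)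
    have hdx : d ∈ forb f x := mem_forb_symm f S hfS hinj hd hxO
    obtain ⟨n, hn⟩ := hdx
    have hex : ∃ m, f^[m] x = d ∨ f^[m] x = d' := ⟨n, Or.inl hn⟩
    set n0 := Nat.find hex with hn0
    have hspec : f^[n0] x = d ∨ f^[n0] x = d' := Nat.find_spec hex
    have hmin : ∀ k < n0, ¬ (f^[k] x = d ∨ f^[k] x = d') := fun k hk => Nat.find_min hex hk
    have htraj : ∀ k, k ≤ n0 → f'^[k] x = f^[k] x := by
      intro k
      induction k with
      | zero => intro _; rfl
      | succ k ih =>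
          intro hk
          rw [Function.iterate_succ_apply', Function.iterate_succ_apply',
            ih (Nat.le_of_succ_le hk)]
          have hz : f^[k] x ∈ S := iter_mem f S hfS k x hxS
          have hne := hmin k (Nat.lt_of_succ_le hk)
          exact h5 _ hz (fun h => hne (Or.inl h)) (fun h => hne (Or.inr h))
    rcases hspec with h | h
    · left
      have : d ∈ forb f' x := ⟨n0, by rw [htraj n0 le_rfl]; exact h⟩
      exact (forb_eq_of_mem f' S' hfS' hinj' hxS' this).symm
    · right
      have : d' ∈ forb f' x := ⟨n0, by rw [htraj n0 le_rfl]; exact h⟩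
      exact (forb_eq_of_mem f' S' hfS' hinj' hxS' this).symm
  -- d is not on the new orbit of d'
  obtain ⟨t0, ht0⟩ := hsame
  have ht0pos : 0 < t0 := by
    rcases Nat.eq_zero_or_pos t0 with h | h
    · exact absurd (by simpa [h] using ht0) hdd
    · exact h
  have hext : ∃ m, 0 < m ∧ f^[m] d = d' := ⟨t0, ht0pos, ht0⟩
  set t := Nat.find hext with ht
  have htspec : 0 < t ∧ f^[t] d = d' := Nat.find_spec hext
  have htmin : ∀ k, 0 < k → k < t → f^[k] d ≠ d' := by
    intro k hk hkt h
    exact Nat.find_min hext hkt ⟨hk, h⟩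
  have hkd : ∀ k, 0 < k → k < t → f^[k] d ≠ d := by
    intro k hk hkt h
    have : f^[t - k] d = d' := by
      have : f^[(t - k) + k] d = f^[t - k] (f^[k] d) := Function.iterate_add_apply f _ _ d
      rw [h] at this
      have e : (t - k) + k = t := by omega
      rw [e] at this
      rw [← this, htspec.2]
    exact htmin (t - k) (by omega) (by omega) this
  have claimC : ∀ k, k < t → f'^[k + 2] d' = f^[k + 1] d := by
    intro k
    induction k with
    | zero =>
        intro _
        show f' (f' d') = f^[1] d
        rw [h3, h4]; rfl
    | succ k ih =>
        intro hk
        have ihk := ih (by omega)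
        rw [show k + 1 + 2 = (k + 2) + 1 by omega, Function.iterate_succ_apply', ihk]
        have hz : f^[k + 1] d ∈ S := iter_mem f S hfS _ d hd
        rw [h5 _ hz (hkd (k + 1) (by omega) (by omega)) (htmin (k + 1) (by omega) (by omega))]
        exact (Function.iterate_succ_apply' f (k + 1) d).symm
  have hper : f'^[t + 1] d' = d' := by
    have h1t : t - 1 < t := by omega
    have := claimC (t - 1) h1t
    rw [show t - 1 + 2 = t + 1 by omega, show t - 1 + 1 = t by omega] at this
    rw [this, htspec.2]
  have hdB : d ∉ forb f' d' := by
    rintro ⟨n, hn⟩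
    rw [iterate_mod f' (by omega : 0 < t + 1) hper n] at hn
    set r := n % (t + 1) with hr
    have hrlt : r < t + 1 := Nat.mod_lt _ (by omega)
    rcases Nat.lt_or_ge r 2 with h2 | h2
    · interval_cases r
      · simp only [Function.iterate_zero, id_eq] at hn
        exact hdd hn.symm
      · rw [Function.iterate_one, h3] at hn
        exact hp (hn.symm ▸ hd)
    · have := claimC (r - 2) (by omega)
      rw [show r - 2 + 2 = r by omega] at this
      rw [this] at hn
      rcases Nat.lt_or_ge (r - 1) t with hlt | hge
      · exact hkd (r - 1) (by omega) hlt (by rw [show r - 2 + 1 = r - 1 by omega] at hn; exact hn)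
      · have hrt : r - 2 + 1 = t := by omega
        rw [hrt, htspec.2] at hn
        exact hdd hn.symm
  have hABne : forb f' d ≠ forb f' d' := fun h => hdB (h ▸ mem_forb_self f' d)
  have hqA : q ∈ forb f' d := ⟨1, by simpa using h1⟩
  have hpB : p ∈ forb f' d' := ⟨1, by simpa using h3⟩
  -- image identities
  set W : Set (Set D) := (fun x => forb f x) '' (S \ O) with hW
  have himg' : (fun x => forb f' x) '' S' = W ∪ {forb f' d, forb f' d'} := by
    apply Set.Subset.antisymm
    · rintro T ⟨x, hx, rfl⟩
      simp only [Set.mem_union, Set.mem_insert_iff, Set.mem_singleton_iff]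
      rcases (hmemS' x).1 hx with hxS | hxe | hxe
      · by_cases hxO : x ∈ O
        · rcases keyB x hxO with h | h
          · exact Or.inr (Or.inl h)
          · exact Or.inr (Or.inr h)
        · exact Or.inl ⟨x, ⟨hxS, hxO⟩, (keyA2 x hxS hxO).symm⟩
      · subst hxe
        exact Or.inr (Or.inr (forb_eq_of_mem f' S' hfS' hinj' hd'S' hpB))
      · subst hxe
        exact Or.inr (Or.inl (forb_eq_of_mem f' S' hfS' hinj' hdS' hqA))
    · rintro T (⟨x, ⟨hxS, hxO⟩, rfl⟩ | hT)
      · exact ⟨x, (hmemS' x).2 (Or.inl hxS), keyA2 x hxS hxO⟩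
      · rcases hT with h | h
        · exact ⟨d, hdS', h.symm⟩
        · exact ⟨d', hd'S', h.symm⟩
  have himg : (fun x => forb f x) '' S = W ∪ {O} := by
    apply Set.Subset.antisymm
    · rintro T ⟨x, hxS, rfl⟩
      simp only [Set.mem_union, Set.mem_singleton_iff]
      by_cases hxO : x ∈ O
      · exact Or.inr (forb_eq_of_mem f S hfS hinj hd hxO)
      · exact Or.inl ⟨x, ⟨hxS, hxO⟩, rfl⟩
    · rintro T (⟨x, ⟨hxS, hxO⟩, rfl⟩ | hT)
      · exact ⟨x, hxS, rfl⟩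
      · exact ⟨d, hd, hT.symm⟩
  have hOnot : O ∉ W := by
    rintro ⟨x, ⟨hxS, hxO⟩, h⟩
    have h' : forb f x = O := h
    exact hxO (h' ▸ mem_forb_self f x)
  have hAnot : forb f' d ∉ W := by
    rintro ⟨x, ⟨hxS, hxO⟩, h⟩
    have h' : forb f x = forb f' d := h
    exact hq (forb_subset f S hfS hxS (h'.symm ▸ hqA))
  have hBnot : forb f' d' ∉ W := by
    rintro ⟨x, ⟨hxS, hxO⟩, h⟩
    have h' : forb f x = forb f' d' := h
    exact hp (forb_subset f S hfS hxS (h'.symm ▸ hpB))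
  have hWfin : W.Finite := Set.toFinite W
  have e1 : W ∪ {forb f' d, forb f' d'} = insert (forb f' d) (insert (forb f' d') W) := by
    ext T
    simp only [Set.mem_union, Set.mem_insert_iff, Set.mem_singleton_iff]
    tauto
  have e2 : W ∪ {O} = insert O W := by
    ext T
    simp only [Set.mem_union, Set.mem_insert_iff, Set.mem_singleton_iff]
    tauto
  have hA_not : forb f' d ∉ insert (forb f' d') W := by
    simp only [Set.mem_insert_iff]
    push_neg
    exact ⟨hABne, hAnot⟩
  have c1 : numOrbitsIn f' S' = W.ncard + 2 := by
    rw [numOrbitsIn, himg', e1, Set.ncard_insert_of_notMem hA_not (hWfin.insert _),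
      Set.ncard_insert_of_notMem hBnot hWfin]
  have c2 : numOrbitsIn f S = W.ncard + 1 := by
    rw [numOrbitsIn, himg, e2, Set.ncard_insert_of_notMem hOnot hWfin]
  rw [c1, c2]


lemma iterate_orderOf (f : Equiv.Perm D) (x : D) : (⇑f)^[orderOf f] x = x := by
  rw [← Equiv.Perm.coe_pow, pow_orderOf_eq_one]; rfl

lemma rs_spec (f : Equiv.Perm D) (s : Set D) {x : D} (hx : x ∈ s) :
    0 < returnSteps f s x ∧ (⇑f)^[returnSteps f s x] x ∈ s ∧
      ∀ k, 0 < k → k < returnSteps f s x → (⇑f)^[k] x ∉ s := by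
  have hne : {k | 0 < k ∧ (⇑f)^[k] x ∈ s}.Nonempty :=
    ⟨orderOf f, orderOf_pos f, by rw [iterate_orderOf]; exact hx⟩
  have hmem : returnSteps f s x ∈ {k | 0 < k ∧ (⇑f)^[k] x ∈ s} := Nat.sInf_mem hne
  refine ⟨hmem.1, hmem.2, ?_⟩
  intro k hk hlt hks
  exact (Nat.notMem_of_lt_sInf hlt) ⟨hk, hks⟩

lemma rs_eq (f : Equiv.Perm D) (s : Set D) (x : D) {j : ℕ} (hj0 : 0 < j)
    (hjs : (⇑f)^[j] x ∈ s) (hmin : ∀ k, 0 < k → k < j → (⇑f)^[k] x ∉ s) :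
    returnSteps f s x = j := by
  have hne : {k | 0 < k ∧ (⇑f)^[k] x ∈ s}.Nonempty := ⟨j, hj0, hjs⟩
  have hmem : returnSteps f s x ∈ {k | 0 < k ∧ (⇑f)^[k] x ∈ s} := Nat.sInf_mem hne
  have hle : returnSteps f s x ≤ j := Nat.sInf_le ⟨hj0, hjs⟩
  rcases Nat.lt_or_ge (returnSteps f s x) j with h | h
  · exact absurd hmem.2 (hmin _ hmem.1 h)
  · omega

lemma iter_cancel (f : Equiv.Perm D) {i j : ℕ} {x y : D} (hij : i ≤ j)
    (h : (⇑f)^[i] x = (⇑f)^[j] y) : x = (⇑f)^[j - i] y := by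
  apply f.injective.iterate i
  rw [h, ← Function.iterate_add_apply, show i + (j - i) = j by omega]

lemma corner_unique (M : CombMap D) (E : Set D) {x d u : D} {i j : ℕ}
    (hx : x ∈ E) (hd : d ∈ E)
    (hi0 : 0 < i) (hir : i < returnSteps M.next E x) (hiu : (⇑M.next)^[i] x = u)
    (hj0 : 0 < j) (hjr : j < returnSteps M.next E d) (hju : (⇑M.next)^[j] d = u) :
    x = d := by
  rcases le_total i j with hij | hij
  · have hxd : x = (⇑M.next)^[j - i] d := iter_cancel M.next hij (by rw [hiu, hju])
    rcases Nat.eq_zero_or_pos (j - i) with h0 | h0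
    · rw [h0] at hxd; simpa using hxd
    · exact absurd (hxd ▸ hx) ((rs_spec M.next E hd).2.2 _ h0 (by omega))
  · have hxd : d = (⇑M.next)^[i - j] x := iter_cancel M.next hij (by rw [hiu, hju])
    rcases Nat.eq_zero_or_pos (i - j) with h0 | h0
    · rw [h0] at hxd; simpa using hxd.symm
    · exact absurd (hxd ▸ hd) ((rs_spec M.next E hx).2.2 _ h0 (by omega))

lemma no_opp_in_orbit (M : CombMap D) (hL : M.NoLoops) {z u : D} {a b : ℕ}
    (ha : (⇑M.next)^[a] z = u) (hb : (⇑M.next)^[b] z = M.opp u) : False := by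
  apply hL u
  have h1 : u ∈ forb (⇑M.next) z := ⟨a, ha⟩
  have h2 : M.opp u ∈ forb (⇑M.next) z := ⟨b, hb⟩
  have heq : forb (⇑M.next) u = forb (⇑M.next) z :=
    forb_eq_of_mem (⇑M.next) Set.univ (fun x _ => Set.mem_univ _)
      (fun x _ y _ h => M.next.injective h) (Set.mem_univ z) h1
  show M.opp u ∈ forb (⇑M.next) u
  rw [heq]
  exact h2

lemma firstReturn_insert (M : CombMap D) (hL : M.NoLoops) (E E' : Set D) {u d : D} {j : ℕ}
    (hd : d ∈ E)
    (hE' : ∀ y, y ∈ E' ↔ (y ∈ E ∨ y = u ∨ y = M.opp u))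
    (hj0 : 0 < j) (hjr : j < returnSteps M.next E d)
    (hju : (⇑M.next)^[j] d = u) :
    firstReturn M.next E' d = u ∧ firstReturn M.next E' u = firstReturn M.next E d := by
  obtain ⟨hr0, hrs, hrmin⟩ := rs_spec M.next E hd
  have hnotE' : ∀ k, 0 < k → k < returnSteps M.next E d → k ≠ j → (⇑M.next)^[k] d ∉ E' := by
    intro k hk0 hkr hkj hmem
    rcases (hE' _).1 hmem with h | h | h
    · exact hrmin k hk0 hkr h
    · rcases Nat.lt_or_ge k j with hkj' | hkj'
      · have hcan : d = (⇑M.next)^[j - k] d :=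
          iter_cancel M.next (le_of_lt hkj') (by rw [h, hju])
        exact hrmin (j - k) (by omega) (by omega) (hcan ▸ hd)
      · have hkj'' : j < k := by omega
        have hcan : d = (⇑M.next)^[k - j] d :=
          iter_cancel M.next (le_of_lt hkj'') (by rw [h, hju])
        exact hrmin (k - j) (by omega) (by omega) (hcan ▸ hd)
    · exact no_opp_in_orbit M hL hju h
  have hr1 : returnSteps M.next E' d = j := by
    apply rs_eq M.next E' d hj0 (by rw [hju]; exact (hE' u).2 (Or.inr (Or.inl rfl)))
    intro k hk0 hkj
    exact hnotE' k hk0 (by omega) (by omega)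
  constructor
  · show (⇑M.next)^[returnSteps M.next E' d] d = u
    rw [hr1]; exact hju
  · have hr2 : returnSteps M.next E' u = returnSteps M.next E d - j := by
      apply rs_eq M.next E' u (by omega)
      · rw [← hju, ← Function.iterate_add_apply,
          show returnSteps M.next E d - j + j = returnSteps M.next E d by omega]
        exact (hE' _).2 (Or.inl hrs)
      · intro k hk0 hkj hmem
        rw [← hju, ← Function.iterate_add_apply] at hmem
        exact hnotE' (k + j) (by omega) (by omega) (by omega) hmem
    show (⇑M.next)^[returnSteps M.next E' u] u = (⇑M.next)^[returnSteps M.next E d] d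
    rw [hr2, ← hju, ← Function.iterate_add_apply,
      show returnSteps M.next E d - j + j = returnSteps M.next E d by omega]

lemma firstReturn_other (M : CombMap D) (E E' : Set D) {u d d' x : D} {j j' : ℕ}
    (hd : d ∈ E) (hd' : d' ∈ E) (hx : x ∈ E)
    (hE' : ∀ y, y ∈ E' ↔ (y ∈ E ∨ y = u ∨ y = M.opp u))
    (hj0 : 0 < j) (hjr : j < returnSteps M.next E d) (hju : (⇑M.next)^[j] d = u)
    (hj0' : 0 < j') (hjr' : j' < returnSteps M.next E d')
    (hju' : (⇑M.next)^[j'] d' = M.opp u)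
    (hxd : x ≠ d) (hxd' : x ≠ d') :
    firstReturn M.next E' x = firstReturn M.next E x := by
  obtain ⟨hr0, hrs, hrmin⟩ := rs_spec M.next E hx
  have hreq : returnSteps M.next E' x = returnSteps M.next E x := by
    apply rs_eq M.next E' x hr0 ((hE' _).2 (Or.inl hrs))
    intro k hk0 hkr hmem
    rcases (hE' _).1 hmem with h | h | h
    · exact hrmin k hk0 hkr h
    · exact hxd (corner_unique M E hx hd hk0 hkr h hj0 hjr hju)
    · exact hxd' (corner_unique M E hx hd' hk0 hkr h hj0' hjr' hju')
  show (⇑M.next)^[returnSteps M.next E' x] x = (⇑M.next)^[returnSteps M.next E x] x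
  rw [hreq]

lemma bwalk_mem (M : CombMap D) (C : Subcomplex M) {x : D} (hx : x ∈ C.Es \ C.Fs) :
    C.bwalk x ∈ C.Es \ C.Fs := by
  obtain ⟨hxE, hxF⟩ := hx
  obtain ⟨hr0, hrs, hrmin⟩ := rs_spec M.next C.Es hxE
  constructor
  · exact C.es_closed _ hrs
  · intro hF
    have hF' : M.opp ((⇑M.next)^[returnSteps M.next C.Es x] x) ∈ C.Fs := hF
    have h2 := perm_inv_mem M.facePerm C.Fs C.fs_closed _ hF'
    have h3 : M.facePerm.symm (M.opp ((⇑M.next)^[returnSteps M.next C.Es x] x)) =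
        (⇑M.next)^[returnSteps M.next C.Es x - 1] x := by
      have hstep : M.facePerm ((⇑M.next)^[returnSteps M.next C.Es x - 1] x) =
          M.opp ((⇑M.next)^[returnSteps M.next C.Es x] x) := by
        have hiter : (⇑M.next)^[returnSteps M.next C.Es x] x =
            M.next ((⇑M.next)^[returnSteps M.next C.Es x - 1] x) := by
          conv_lhs => rw [show returnSteps M.next C.Es x =
            (returnSteps M.next C.Es x - 1) + 1 by omega]
          rw [Function.iterate_succ_apply']
        rw [hiter]
        simp [CombMap.facePerm, Equiv.trans_apply]
      rw [← hstep, Equiv.symm_apply_apply]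
    rw [h3] at h2
    rcases Nat.lt_or_ge 1 (returnSteps M.next C.Es x) with h1 | h1
    · exact hrmin _ (by omega) (by omega) (C.face_edges _ h2)
    · have : returnSteps M.next C.Es x - 1 = 0 := by omega
      rw [this] at h2
      exact hxF h2

lemma firstReturn_inj (M : CombMap D) (E : Set D) {x y : D} (hx : x ∈ E) (hy : y ∈ E)
    (h : firstReturn M.next E x = firstReturn M.next E y) : x = y := by
  obtain ⟨hx0, hxs, hxmin⟩ := rs_spec M.next E hx
  obtain ⟨hy0, hys, hymin⟩ := rs_spec M.next E hy
  have h' : (⇑M.next)^[returnSteps M.next E x] x = (⇑M.next)^[returnSteps M.next E y] y := h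
  rcases le_total (returnSteps M.next E x) (returnSteps M.next E y) with hle | hle
  · have hxy : x = (⇑M.next)^[returnSteps M.next E y - returnSteps M.next E x] y :=
      iter_cancel M.next hle h'
    rcases Nat.eq_zero_or_pos (returnSteps M.next E y - returnSteps M.next E x) with h0 | h0
    · rw [h0] at hxy; simpa using hxy
    · exact absurd (hxy ▸ hx) (hymin _ h0 (by omega))
  · have hxy : y = (⇑M.next)^[returnSteps M.next E x - returnSteps M.next E y] x :=
      iter_cancel M.next hle h'.symm
    rcases Nat.eq_zero_or_pos (returnSteps M.next E x - returnSteps M.next E y) with h0 | h0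
    · rw [h0] at hxy; simpa using hxy.symm
    · exact absurd (hxy ▸ hy) (hxmin _ h0 (by omega))

lemma forb_opp (M : CombMap D) (x : D) : forb (⇑M.opp) x = {x, M.opp x} := by
  have hfwd : ∀ n, (⇑M.opp)^[n] x ∈ ({x, M.opp x} : Set D) := by
    intro n
    induction n with
    | zero => exact Or.inl rfl
    | succ n ih =>
        rw [Function.iterate_succ_apply']
        rcases ih with h | h
        · rw [h]; exact Or.inr rfl
        · rw [h, M.opp_invol]; exact Or.inl rfl
  ext z
  constructor
  · rintro ⟨n, rfl⟩; exact hfwd n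
  · rintro (rfl | rfl)
    · exact ⟨0, rfl⟩
    · exact ⟨1, rfl⟩

end SplitAux

open CombMap in
theorem split_effect
    {D : Type} [Fintype D] [DecidableEq D]
    (M : CombMap D) (g : ℕ) (hT : IsTriang M g)
    (C : Subcomplex M) (hC : C.Conn) (hD : C.compDual.Conn)
    (e : D) (he : C.SplitEdge e)
    (C' : Subcomplex M) (hadd : IsAddEdge C e C') :
    C'.compDual.Conn ∧
    C'.numBoundaryFaces = C.numBoundaryFaces + 1 ∧
    C'.eulerChar = C.eulerChar - 1 ∧
    C'.assocEulerChar = C.assocEulerChar ∧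
    (∀ g' : ℤ, C'.assocHasGenus g' ↔ C.assocHasGenus g') := by
  classical
  obtain ⟨hF, hE, hV⟩ := hadd
  obtain ⟨⟨heE, hoeE, ⟨d, hdB, hdce⟩, ⟨d2, hd2B, hd2ce⟩⟩, hnb, hsfh⟩ := he
  have hsf : C.SameBoundaryFace d d2 := hsfh d d2 hdB hdce hd2B hd2ce
  obtain ⟨j, hj0, hjr, hje⟩ := hdce
  obtain ⟨j2, hj20, hj2r, hj2e⟩ := hd2ce
  have heF : e ∉ C.Fs := fun h => heE (C.face_edges _ h)
  have hoeF : M.opp e ∉ C.Fs := fun h => hoeE (C.face_edges _ h)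
  have hE' : ∀ y, y ∈ C'.Es ↔ (y ∈ C.Es ∨ y = e ∨ y = M.opp e) := by
    intro y
    rw [hE]
    simp only [Set.mem_union, Set.mem_insert_iff, Set.mem_singleton_iff]
  have hE'2 : ∀ y, y ∈ C'.Es ↔ (y ∈ C.Es ∨ y = M.opp e ∨ y = M.opp (M.opp e)) := by
    intro y
    rw [hE' y, M.opp_invol]
    tauto
  have hdd2 : d ≠ d2 := by
    intro h
    subst h
    exact SplitAux.no_opp_in_orbit M hT.noLoops hje.symm hj2e.symm
  -- part 1 : the complementary dual stays connected
  have part1 : C'.compDual.Conn := by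
    intro a ha b hb
    have ha' : a ∈ C.compDual.Vs := by
      show a ∈ C.Fsᶜ
      have h0 : a ∈ C'.Fsᶜ := ha
      rwa [hF] at h0
    have hb' : b ∈ C.compDual.Vs := by
      show b ∈ C.Fsᶜ
      have h0 : b ∈ C'.Fsᶜ := hb
      rwa [hF] at h0
    have hreach : ∀ a ∈ C.compDual.Vs, ∀ b ∈ C.compDual.Vs,
        C.compDual.reachAvoiding {e, M.opp e} a b := by
      by_contra hcon
      exact hnb ⟨heE, hcon⟩
    refine (Relation.ReflTransGen.mono ?_ : _ ≤ _) a b (hreach a ha' b hb')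
    rintro x y (⟨hx1, hx2, hx3⟩ | ⟨hxE, hxe, hxoe, rfl⟩)
    · left
      refine ⟨?_, ?_, hx3⟩
      · show x ∈ C'.Fsᶜ
        rw [hF]
        exact hx1
      · show y ∈ C'.Fsᶜ
        rw [hF]
        exact hx2
    · right
      refine ⟨?_, Set.notMem_empty x, Set.notMem_empty _, rfl⟩
      show x ∈ C'.Esᶜ
      rw [hE]
      intro hmem
      rcases hmem with h | h
      · exact hxE h
      · exact hxe h
  -- part 2 : one more boundary face
  have hdS : d ∈ C.Es \ C.Fs := ⟨hdB.1, hdB.2⟩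
  have hd2S : d2 ∈ C.Es \ C.Fs := ⟨hd2B.1, hd2B.2⟩
  have hfS : ∀ x ∈ C.Es \ C.Fs, C.bwalk x ∈ C.Es \ C.Fs :=
    fun x hx => SplitAux.bwalk_mem M C hx
  have hinjS : ∀ x ∈ C.Es \ C.Fs, ∀ y ∈ C.Es \ C.Fs, C.bwalk x = C.bwalk y → x = y := by
    intro x hx y hy h
    have h' : M.opp (firstReturn M.next C.Es x) = M.opp (firstReturn M.next C.Es y) := h
    exact SplitAux.firstReturn_inj M C.Es hx.1 hy.1 (M.opp.injective h')
  have hsame : d2 ∈ forb C.bwalk d := by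
    rcases hsf with h | h
    · exact h
    · exact SplitAux.mem_forb_symm C.bwalk (C.Es \ C.Fs) hfS hinjS hd2S h
  have FR1 := SplitAux.firstReturn_insert M hT.noLoops C.Es C'.Es hdB.1 hE' hj0 hjr hje.symm
  have FR2 := SplitAux.firstReturn_insert M hT.noLoops C.Es C'.Es hd2B.1 hE'2 hj20 hj2r hj2e.symm
  have hw1 : C'.bwalk d = M.opp e := by
    show M.opp (firstReturn M.next C'.Es d) = M.opp e
    rw [FR1.1]
  have hw2 : C'.bwalk (M.opp e) = C.bwalk d2 := by
    show M.opp (firstReturn M.next C'.Es (M.opp e)) = M.opp (firstReturn M.next C.Es d2)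
    rw [FR2.2]
  have hw3 : C'.bwalk d2 = e := by
    show M.opp (firstReturn M.next C'.Es d2) = e
    rw [FR2.1, M.opp_invol]
  have hw4 : C'.bwalk e = C.bwalk d := by
    show M.opp (firstReturn M.next C'.Es e) = M.opp (firstReturn M.next C.Es d)
    rw [FR1.2]
  have hw5 : ∀ x ∈ C.Es \ C.Fs, x ≠ d → x ≠ d2 → C'.bwalk x = C.bwalk x := by
    intro x hx hxd hxd2
    show M.opp (firstReturn M.next C'.Es x) = M.opp (firstReturn M.next C.Es x)
    rw [SplitAux.firstReturn_other M C.Es C'.Es hdB.1 hd2B.1 hx.1 hE' hj0 hjr hje.symm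
      hj20 hj2r hj2e.symm hxd hxd2]
  have hSS' : C'.Es \ C'.Fs = (C.Es \ C.Fs) ∪ {e, M.opp e} := by
    rw [hE, hF]
    ext y
    simp only [Set.mem_diff, Set.mem_union, Set.mem_insert_iff, Set.mem_singleton_iff]
    constructor
    · rintro ⟨h1 | h1 | h1, h2⟩
      · exact Or.inl ⟨h1, h2⟩
      · exact Or.inr (Or.inl h1)
      · exact Or.inr (Or.inr h1)
    · rintro (⟨h1, h2⟩ | h1 | h1)
      · exact ⟨Or.inl h1, h2⟩
      · exact ⟨Or.inr (Or.inl h1), by rw [h1]; exact heF⟩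
      · exact ⟨Or.inr (Or.inr h1), by rw [h1]; exact hoeF⟩
  have part2 : C'.numBoundaryFaces = C.numBoundaryFaces + 1 := by
    show numOrbitsIn C'.bwalk (C'.Es \ C'.Fs) = numOrbitsIn C.bwalk (C.Es \ C.Fs) + 1
    rw [hSS']
    exact SplitAux.orbit_split C.bwalk C'.bwalk (C.Es \ C.Fs) d d2 e (M.opp e)
      hfS hinjS hdS hd2S hdd2 (fun h => heE h.1) (fun h => hoeE h.1)
      (Ne.symm (M.opp_ne e)) hsame hw1 hw2 hw3 hw4 hw5
  -- part 3 : Euler characteristic drops by one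
  have hEorb : numOrbitsIn (⇑M.opp) C'.Es = numOrbitsIn (⇑M.opp) C.Es + 1 := by
    show ((fun x => forb (⇑M.opp) x) '' C'.Es).ncard
      = ((fun x => forb (⇑M.opp) x) '' C.Es).ncard + 1
    rw [hE, Set.image_union]
    have e1 : forb (⇑M.opp) e = {e, M.opp e} := SplitAux.forb_opp M e
    have e2 : forb (⇑M.opp) (M.opp e) = {e, M.opp e} := by
      rw [SplitAux.forb_opp M (M.opp e), M.opp_invol]
      ext z
      simp only [Set.mem_insert_iff, Set.mem_singleton_iff]
      tauto
    have hpair : (fun x => forb (⇑M.opp) x) '' ({e, M.opp e} : Set D)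
        = {({e, M.opp e} : Set D)} := by
      apply Set.Subset.antisymm
      · rintro T ⟨y, hy, rfl⟩
        simp only [Set.mem_insert_iff, Set.mem_singleton_iff] at hy
        rcases hy with rfl | rfl
        · exact e1
        · exact e2
      · rintro T hT
        simp only [Set.mem_singleton_iff] at hT
        exact ⟨e, Set.mem_insert _ _, by rw [hT]; exact e1⟩
    have hnot : ({e, M.opp e} : Set D) ∉ (fun x => forb (⇑M.opp) x) '' C.Es := by
      rintro ⟨y, hy, hyeq⟩
      have h' : forb (⇑M.opp) y = {e, M.opp e} := hyeq
      rw [SplitAux.forb_opp M y] at h'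
      have he' : e ∈ ({y, M.opp y} : Set D) := by rw [h']; exact Set.mem_insert _ _
      rcases he' with h | h
      · exact heE (by rw [h]; exact hy)
      · exact heE (by rw [h]; exact C.es_closed y hy)
    rw [hpair, Set.union_singleton, Set.ncard_insert_of_notMem hnot (Set.toFinite _)]
  have part3 : C'.eulerChar = C.eulerChar - 1 := by
    simp only [Subcomplex.eulerChar]
    rw [hV, hF, hEorb]
    push_cast
    ring
  -- parts 4 and 5
  have part4 : C'.assocEulerChar = C.assocEulerChar := by
    simp only [Subcomplex.assocEulerChar]
    rw [part3, part2]
    push_cast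
    ring
  refine ⟨part1, part2, part3, part4, fun g' => ?_⟩
  simp only [Subcomplex.assocHasGenus]
  rw [part4]
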